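/- Let δ ∈ (0,1), χ ∈ (0,1], and α > 0 be reals. Set B := (1+α)(1+δχ) − αδ and D := B² − 4δχ(1+α). Then D > 0, the number κ := (B − √D)/(2δχ(1+α)) lies in (0,1), and for F(y) = δχ·y² + (δ(1−χ) − δ/(1+α) − 1)·y + 1/(1+α) one has F(κ) = 0; moreover, for every y ∈ [0,1], F(y) ≥ 0 if and only if y ≤ κ. -/

import Mathlib

theorem dirty_faces_kappa_cutoff
    (δ χ α : ℝ) (hδ : δ ∈ Set.Ioo (0:ℝ) 1) (hχ : χ ∈ Set.Ioc (0:ℝ) 1) (hα : 0 < α) :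
    0 < ((1 + α) * (1 + δ * χ) - α * δ) ^ 2 - 4 * δ * χ * (1 + α) ∧
    (((1 + α) * (1 + δ * χ) - α * δ) -
        Real.sqrt (((1 + α) * (1 + δ * χ) - α * δ) ^ 2 - 4 * δ * χ * (1 + α))) /
      (2 * δ * χ * (1 + α)) ∈ Set.Ioo (0:ℝ) 1 ∧
    (fun y : ℝ => δ * χ * y ^ 2 + (δ * (1 - χ) - δ / (1 + α) - 1) * y + 1 / (1 + α))
      ((((1 + α) * (1 + δ * χ) - α * δ) -
          Real.sqrt (((1 + α) * (1 + δ * χ) - α * δ) ^ 2 - 4 * δ * χ * (1 + α))) /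
        (2 * δ * χ * (1 + α))) = 0 ∧
    ∀ y ∈ Set.Icc (0:ℝ) 1,
      (0 ≤ δ * χ * y ^ 2 + (δ * (1 - χ) - δ / (1 + α) - 1) * y + 1 / (1 + α) ↔
        y ≤ (((1 + α) * (1 + δ * χ) - α * δ) -
            Real.sqrt (((1 + α) * (1 + δ * χ) - α * δ) ^ 2 - 4 * δ * χ * (1 + α))) /
          (2 * δ * χ * (1 + α))) := by
  obtain ⟨hδ0, hδ1⟩ := hδ
  obtain ⟨hχ0, hχ1⟩ := hχ
  have hα1 : (0:ℝ) < 1 + α := by linarith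
  set B := (1 + α) * (1 + δ * χ) - α * δ with hB
  set A := δ * χ * (1 + α) with hA
  have hA0 : 0 < A := by positivity
  set D := B ^ 2 - 4 * δ * χ * (1 + α) with hD
  have hDA : D = B ^ 2 - 4 * A := by rw [hD, hA]; ring
  have hBA : B = 1 + A + α * (1 - δ) := by rw [hB, hA]; ring
  have he : 0 < α * (1 - δ) := by nlinarith
  have hDpos : 0 < D := by nlinarith [sq_nonneg (1 - A)]
  set S := Real.sqrt D with hS
  have hS2 : S ^ 2 = D := Real.sq_sqrt hDpos.le
  have hS0 : 0 < S := Real.sqrt_pos.mpr hDpos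
  have h2A : (2:ℝ) * δ * χ * (1 + α) = 2 * A := by rw [hA]; ring
  set κ := (B - S) / (2 * δ * χ * (1 + α)) with hκ
  clear_value B A D S κ
  have hκ' : κ = (B - S) / (2 * A) := by rw [hκ, h2A]
  have hB0 : 0 < B := by nlinarith
  have hSB : S < B := by nlinarith
  have hκ0 : 0 < κ := by
    rw [hκ']; exact div_pos (by linarith) (by linarith)
  have hκ1 : κ < 1 := by
    rw [hκ']
    rw [div_lt_one (by linarith)]
    rcases le_or_gt (B - 2 * A) 0 with h | h
    · linarith
    · nlinarith
  have hκp1 : 1 < (B + S) / (2 * A) := by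
    rw [lt_div_iff₀ (by linarith)]
    rcases le_or_gt (2 * A - B) 0 with h | h
    · linarith
    · nlinarith
  have hS2' : S ^ 2 = B ^ 2 - 4 * A := by rw [hS2, hDA]
  have hroot : A * κ ^ 2 - B * κ + 1 = 0 := by
    rw [hκ']
    field_simp
    linear_combination hS2'
  have hFform : ∀ y : ℝ, δ * χ * y ^ 2 + (δ * (1 - χ) - δ / (1 + α) - 1) * y + 1 / (1 + α)
      = (A * y ^ 2 - B * y + 1) / (1 + α) := by
    intro y
    rw [hA, hB]
    field_simp
    ring
  have hfact : ∀ y : ℝ, A * y ^ 2 - B * y + 1 = A * (y - κ) * (y - (B + S) / (2 * A)) := by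
    intro y
    rw [hκ']
    field_simp
    ring_nf
    linear_combination hS2'
  refine ⟨hDpos, ⟨hκ0, hκ1⟩, ?_, ?_⟩
  · show δ * χ * κ ^ 2 + (δ * (1 - χ) - δ / (1 + α) - 1) * κ + 1 / (1 + α) = 0
    rw [hFform κ, hroot, zero_div]
  · intro y hy
    obtain ⟨hy0, hy1⟩ := hy
    rw [hFform y]
    rw [le_div_iff₀ hα1, zero_mul]
    have h1 : y - (B + S) / (2 * A) < 0 := by linarith
    constructor
    · intro h
      by_contra hc
      push_neg at hc
      have h2 := mul_neg_of_pos_of_neg (mul_pos hA0 (sub_pos.mpr hc)) h1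
      rw [hfact y] at h
      linarith
    · intro h
      have h2 : A * (y - κ) ≤ 0 :=
        mul_nonpos_of_nonneg_of_nonpos hA0.le (by linarith)
      rw [hfact y]
      nlinarith [h2, h1]
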